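/- Let M_1 and M_2 be matroids on the same finite ground set E with rank functions r_1 and r_2, and let P_i be the convex hull in ℝ^E of the characteristic vectors of independent sets of M_i (i = 1,2). Let w ∈ ℝ^E with w ≥ 0 and let λ_1, λ_2 ≥ 0 be reals. Then there exist x_1 ∈ P_1 and x_2 ∈ P_2 with λ_1·x_1 + λ_2·x_2 = w if and only if λ_1·r_1(X) + λ_2·r_2(X) ≥ w(X) for all X ⊆ E. -/

import Mathlib

open Finset
open scoped Classical

variable {V : Type*} [Fintype V]

/-- The set of edges of `G` with one endpoint in `S₁` and the other in `S₂`. -/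
noncomputable def cutBetween (G : SimpleGraph V) (S₁ S₂ : Finset V) : Finset (Sym2 V) :=
  G.edgeFinset.filter (fun e => ∃ u v, e = s(u, v) ∧ u ∈ S₁ ∧ v ∈ S₂)

/-- The cut `δ(S)`: edges of `G` with exactly one endpoint in `S`. -/
noncomputable def cut (G : SimpleGraph V) (S : Finset V) : Finset (Sym2 V) :=
  cutBetween G S Sᶜ

/-- `E(S)`: edges of `G` with both endpoints in `S`. -/
noncomputable def inducedEdges (G : SimpleGraph V) (S : Finset V) : Finset (Sym2 V) :=
  G.edgeFinset.filter (fun e => ∀ v ∈ e, v ∈ S)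

/-- `T` is the edge set of a spanning tree of `G`. -/
def IsSpanningTree (G : SimpleGraph V) (T : Finset (Sym2 V)) : Prop :=
  (T : Set (Sym2 V)) ⊆ G.edgeSet ∧ (SimpleGraph.fromEdgeSet (T : Set (Sym2 V))).IsTree

/-- Characteristic vector of a set of edges. -/
noncomputable def chi (T : Finset (Sym2 V)) : Sym2 V → ℝ :=
  fun e => if e ∈ T then 1 else 0

/-- The spanning tree polytope `Sp(G)`. -/
noncomputable def spanningTreePolytope (G : SimpleGraph V) : Set (Sym2 V → ℝ) :=
  convexHull ℝ {x | ∃ T : Finset (Sym2 V), IsSpanningTree G T ∧ x = chi T}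

/-- The level sets `L_i = V_i \ V_{i-1}` of a chain `V_0 ⊊ … ⊊ V_k` (with `V_{-1} = ∅`,
`V_{k+1} = V`). -/
noncomputable def level (Vc : ℕ → Finset V) (k : ℕ) : ℕ → Finset V :=
  fun i => if i = 0 then Vc 0 else if i ≤ k then Vc i \ Vc (i - 1) else Finset.univ \ Vc k

/-- `x` is a chain-point for the chain `V_0 ⊊ … ⊊ V_k`. -/
def IsChainPoint (G : SimpleGraph V) (Vc : ℕ → Finset V) (k : ℕ) (x : Sym2 V → ℝ) : Prop :=
  x ∈ spanningTreePolytope G ∧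
  (∑ e ∈ cut G (Vc 0), x e) = 1 ∧
  (∑ e ∈ cut G (Vc k), x e) = 1 ∧
  (∀ i, 1 ≤ i → i ≤ k - 1 → (∑ e ∈ cut G (Vc i), x e) < 2) ∧
  (∀ i, 1 ≤ i → i ≤ k →
    (∑ v ∈ level Vc k i, ∑ e ∈ cut G {v}, x e) = 2 * ((level Vc k i).card : ℝ))

/-- A Gao-tree for the chain `V_0 ⊊ … ⊊ V_k`: a spanning tree meeting each cut `δ(V_i)`
in exactly one edge. -/
def IsGaoTree (G : SimpleGraph V) (Vc : ℕ → Finset V) (k : ℕ) (T : Finset (Sym2 V)) : Prop :=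
  IsSpanningTree G T ∧ ∀ i ≤ k, (T ∩ cut G (Vc i)).card = 1

/-- A Gao-tree for the subchain of `V_0 ⊊ … ⊊ V_k` given by the index set `I`. -/
def IsGaoTreeOn (G : SimpleGraph V) (Vc : ℕ → Finset V) (I : Finset ℕ)
    (T : Finset (Sym2 V)) : Prop :=
  IsSpanningTree G T ∧ ∀ i ∈ I, (T ∩ cut G (Vc i)).card = 1

/-- `Sp_𝒞(G)`: the convex hull of characteristic vectors of Gao-trees. -/
noncomputable def gaoPolytope (G : SimpleGraph V) (Vc : ℕ → Finset V) (k : ℕ) :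
    Set (Sym2 V → ℝ) :=
  convexHull ℝ {x | ∃ T : Finset (Sym2 V), IsGaoTree G Vc k T ∧ x = chi T}

/-- `F` is the edge set of a spanning tree of the induced subgraph `G(U)`. -/
def IsSpanningTreeOfInduced (G : SimpleGraph V) (U : Finset V) (F : Finset (Sym2 V)) : Prop :=
  (F : Set (Sym2 V)) ⊆ G.edgeSet ∧ (∀ e ∈ F, ∀ v ∈ e, v ∈ U) ∧
  F.card = U.card - 1 ∧
  ∀ u ∈ U, ∀ v ∈ U, (SimpleGraph.fromEdgeSet (F : Set (Sym2 V))).Reachable u v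

/-- The rank of `X` in the cycle matroid of `G`. -/
noncomputable def cycleRank (G : SimpleGraph V) (X : Finset (Sym2 V)) : ℕ :=
  (G.edgeFinset.powerset.filter (fun T => IsSpanningTree G T)).sup (fun T => (T ∩ X).card)

/-- The rank of `X` in the matroid whose bases are the Gao-trees. -/
noncomputable def gaoRank (G : SimpleGraph V) (Vc : ℕ → Finset V) (k : ℕ)
    (X : Finset (Sym2 V)) : ℕ :=
  (G.edgeFinset.powerset.filter (fun T => IsGaoTree G Vc k T)).sup (fun T => (T ∩ X).card)

/-- `x` is a solution of the `s`–`t` path TSP subtour elimination LP. -/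
def IsSubtourLPSolution (G : SimpleGraph V) (s t : V) (x : Sym2 V → ℝ) : Prop :=
  x ∈ spanningTreePolytope G ∧
  (∀ v, v ≠ s → v ≠ t → (∑ e ∈ cut G {v}, x e) = 2) ∧
  (∑ e ∈ cut G {s}, x e) = 1 ∧ (∑ e ∈ cut G {t}, x e) = 1

/-- Rank function of a matroid on a finite ground set, as a function on finsets. -/
noncomputable def mrank {E : Type*} [Fintype E] (M : Matroid E) (X : Finset E) : ℕ :=
  (X.powerset.filter (fun I : Finset E => M.Indep (I : Set E))).sup Finset.card

/-- Convex hull of characteristic vectors of independent sets of a matroid. -/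
noncomputable def indepPolytope {E : Type*} [Fintype E] (M : Matroid E) : Set (E → ℝ) :=
  convexHull ℝ {x | ∃ I : Finset E, M.Indep (I : Set E) ∧
    x = fun e => if e ∈ I then (1 : ℝ) else 0}

section Stmt3Aux

variable {E : Type*} [Fintype E]

private lemma basis_card_eq_mrank' {M : Matroid E} (hE : M.E = Set.univ) {P B : Finset E}
    (hB : M.IsBasis ↑B ↑P) : B.card = mrank M P := by
  refine le_antisymm ?_ ?_
  · refine Finset.le_sup (f := Finset.card) ?_
    simp only [Finset.mem_filter, Finset.mem_powerset]
    exact ⟨Finset.coe_subset.mp hB.subset, hB.indep⟩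
  · refine Finset.sup_le fun I hI => ?_
    simp only [Finset.mem_filter, Finset.mem_powerset] at hI
    obtain ⟨B', hB', hIB'⟩ := hI.2.subset_isBasis_of_subset (Finset.coe_subset.mpr hI.1)
      (by rw [hE]; exact Set.subset_univ _)
    have h1 : (↑I : Set E).encard ≤ (↑B : Set E).encard := by
      rw [← hB'.encard_eq_encard hB]
      exact Set.encard_mono hIB'
    rwa [Set.encard_coe_eq_coe_finsetCard, Set.encard_coe_eq_coe_finsetCard,
      Nat.cast_le] at h1

private lemma exists_extend_basis' {M : Matroid E} (hE : M.E = Set.univ) {P B' : Finset E}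
    (hB' : M.Indep ↑B') (hsub : B' ⊆ P) :
    ∃ B : Finset E, B' ⊆ B ∧ B ⊆ P ∧ M.Indep ↑B ∧ B.card = mrank M P := by
  obtain ⟨Bs, hBs, hsubs⟩ := hB'.subset_isBasis_of_subset (Finset.coe_subset.mpr hsub)
    (by rw [hE]; exact Set.subset_univ _)
  have hfin : Bs.Finite := P.finite_toSet.subset hBs.subset
  have hcoe : (↑hfin.toFinset : Set E) = Bs := hfin.coe_toFinset
  refine ⟨hfin.toFinset, ?_, ?_, ?_, ?_⟩
  · intro e he
    have : (e : E) ∈ Bs := hsubs (by simpa using he)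
    simpa [hfin.mem_toFinset] using this
  · intro e he
    have : (e : E) ∈ (↑P : Set E) := hBs.subset (by simpa [hfin.mem_toFinset] using he)
    simpa using this
  · rw [hcoe]; exact hBs.indep
  · exact basis_card_eq_mrank' hE (by rwa [hcoe])

private lemma sum_le_mrank_of_mem' {M : Matroid E} {x : E → ℝ} (hx : x ∈ indepPolytope M)
    (X : Finset E) : ∑ e ∈ X, x e ≤ (mrank M X : ℝ) := by
  have hsub : indepPolytope M ⊆ {y : E → ℝ | ∑ e ∈ X, y e ≤ (mrank M X : ℝ)} := by
    apply convexHull_min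
    · rintro y ⟨I, hI, rfl⟩
      simp only [Set.mem_setOf_eq]
      have h1 : ∑ e ∈ X, (if e ∈ I then (1 : ℝ) else 0) = ((X ∩ I).card : ℝ) := by
        rw [Finset.sum_ite_mem]
        simp
      rw [h1]
      have hle : (X ∩ I).card ≤ mrank M X := by
        apply Finset.le_sup (f := Finset.card)
        simp only [Finset.mem_filter, Finset.mem_powerset]
        refine ⟨Finset.inter_subset_left, hI.subset ?_⟩
        intro e he
        simp only [Finset.coe_inter, Set.mem_inter_iff, Finset.mem_coe] at he
        exact he.2
      exact_mod_cast hle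
    · exact convex_halfSpace_le
        ⟨fun a b => by simp [Finset.sum_add_distrib],
         fun r y => by simp [Finset.mul_sum]⟩ _
  exact hsub hx

private lemma key_greedy' (M₁ M₂ : Matroid E) (hE₁ : M₁.E = Set.univ) (hE₂ : M₂.E = Set.univ)
    (w : E → ℝ) (l₁ l₂ : ℝ) (hl₁ : 0 ≤ l₁) (hl₂ : 0 ≤ l₂)
    (hr : ∀ X : Finset E, ∑ e ∈ X, w e ≤ l₁ * (mrank M₁ X : ℝ) + l₂ * (mrank M₂ X : ℝ))
    (P : Finset E) :
    ∀ c : E → ℝ, (∀ e ∈ P, 0 < c e) →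
      ∃ B₁ B₂ : Finset E, B₁ ⊆ P ∧ B₂ ⊆ P ∧ M₁.Indep ↑B₁ ∧ M₂.Indep ↑B₂ ∧
        ∑ e ∈ P, c e * w e ≤ l₁ * ∑ e ∈ B₁, c e + l₂ * ∑ e ∈ B₂, c e := by
  induction P using Finset.strongInduction with
  | _ P IH =>
  intro c hc
  rcases P.eq_empty_or_nonempty with rfl | hne
  · exact ⟨∅, ∅, le_refl _, le_refl _, by simpa using M₁.empty_indep,
      by simpa using M₂.empty_indep, by simp⟩
  obtain ⟨m, hm, hmin⟩ := P.exists_min_image c hne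
  have hμpos : 0 < c m := hc m hm
  have hP'ss : P.filter (fun e => c m < c e) ⊂ P := by
    refine Finset.ssubset_iff_of_subset (Finset.filter_subset _ _) |>.mpr ⟨m, hm, ?_⟩
    simp
  obtain ⟨B₁', B₂', hB₁'sub, hB₂'sub, hB₁'i, hB₂'i, hIH⟩ :=
    IH _ hP'ss (fun e => c e - c m) (fun e he => by
      simp only [Finset.mem_filter] at he
      simpa using he.2)
  obtain ⟨B₁, hB₁'B, hB₁P, hB₁i, hB₁card⟩ :=
    exists_extend_basis' hE₁ hB₁'i (hB₁'sub.trans (Finset.filter_subset _ _))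
  obtain ⟨B₂, hB₂'B, hB₂P, hB₂i, hB₂card⟩ :=
    exists_extend_basis' hE₂ hB₂'i (hB₂'sub.trans (Finset.filter_subset _ _))
  refine ⟨B₁, B₂, hB₁P, hB₂P, hB₁i, hB₂i, ?_⟩
  have hsplit : ∑ e ∈ P, c e * w e
      = ∑ e ∈ P, (c e - c m) * w e + c m * ∑ e ∈ P, w e := by
    rw [Finset.mul_sum, ← Finset.sum_add_distrib]
    exact Finset.sum_congr rfl fun e _ => by ring
  have hzero : ∑ e ∈ P, (c e - c m) * w e
      = ∑ e ∈ P.filter (fun e => c m < c e), (c e - c m) * w e := by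
    symm
    apply Finset.sum_subset (Finset.filter_subset _ _)
    intro e heP heP'
    have h1 : c m ≤ c e := hmin e heP
    have h2 : ¬ c m < c e := by
      intro hlt
      exact heP' (Finset.mem_filter.mpr ⟨heP, hlt⟩)
    have h3 : c e = c m := le_antisymm (not_lt.mp h2) h1
    rw [h3]; ring
  have hsum₁ : ∑ e ∈ B₁, (c e - c m) = ∑ e ∈ B₁, c e - c m * (mrank M₁ P : ℝ) := by
    rw [Finset.sum_sub_distrib, Finset.sum_const, nsmul_eq_mul, hB₁card]
    ring
  have hsum₂ : ∑ e ∈ B₂, (c e - c m) = ∑ e ∈ B₂, c e - c m * (mrank M₂ P : ℝ) := by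
    rw [Finset.sum_sub_distrib, Finset.sum_const, nsmul_eq_mul, hB₂card]
    ring
  have hc'B₁ : ∑ e ∈ B₁', (c e - c m) ≤ ∑ e ∈ B₁, c e - c m * (mrank M₁ P : ℝ) := by
    rw [← hsum₁]
    apply Finset.sum_le_sum_of_subset_of_nonneg hB₁'B
    intro e he _
    have := hmin e (hB₁P he)
    linarith
  have hc'B₂ : ∑ e ∈ B₂', (c e - c m) ≤ ∑ e ∈ B₂, c e - c m * (mrank M₂ P : ℝ) := by
    rw [← hsum₂]
    apply Finset.sum_le_sum_of_subset_of_nonneg hB₂'B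
    intro e he _
    have := hmin e (hB₂P he)
    linarith
  calc ∑ e ∈ P, c e * w e
      = ∑ e ∈ P.filter (fun e => c m < c e), (c e - c m) * w e + c m * ∑ e ∈ P, w e := by
        rw [hsplit, hzero]
    _ ≤ (l₁ * ∑ e ∈ B₁', (c e - c m) + l₂ * ∑ e ∈ B₂', (c e - c m))
        + c m * (l₁ * (mrank M₁ P : ℝ) + l₂ * (mrank M₂ P : ℝ)) :=
        add_le_add hIH (mul_le_mul_of_nonneg_left (hr P) hμpos.le)
    _ ≤ (l₁ * (∑ e ∈ B₁, c e - c m * (mrank M₁ P : ℝ))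
          + l₂ * (∑ e ∈ B₂, c e - c m * (mrank M₂ P : ℝ)))
        + c m * (l₁ * (mrank M₁ P : ℝ) + l₂ * (mrank M₂ P : ℝ)) :=
        add_le_add (add_le_add (mul_le_mul_of_nonneg_left hc'B₁ hl₁)
          (mul_le_mul_of_nonneg_left hc'B₂ hl₂)) le_rfl
    _ = l₁ * ∑ e ∈ B₁, c e + l₂ * ∑ e ∈ B₂, c e := by ring

end Stmt3Aux

theorem stmt3 {E : Type*} [Fintype E] (M₁ M₂ : Matroid E)
    (h₁ : M₁.E = Set.univ) (h₂ : M₂.E = Set.univ)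
    (w : E → ℝ) (hw : ∀ e, 0 ≤ w e)
    (l₁ l₂ : ℝ) (hl₁ : 0 ≤ l₁) (hl₂ : 0 ≤ l₂) :
    (∃ x₁ ∈ indepPolytope M₁, ∃ x₂ ∈ indepPolytope M₂,
      (fun e => l₁ * x₁ e + l₂ * x₂ e) = w) ↔
    ∀ X : Finset E, l₁ * (mrank M₁ X : ℝ) + l₂ * (mrank M₂ X : ℝ) ≥ ∑ e ∈ X, w e := by
  constructor
  · rintro ⟨x₁, hx₁, x₂, hx₂, hxw⟩ X
    have hle1 := sum_le_mrank_of_mem' hx₁ X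
    have hle2 := sum_le_mrank_of_mem' hx₂ X
    have h3 : ∑ e ∈ X, w e = l₁ * ∑ e ∈ X, x₁ e + l₂ * ∑ e ∈ X, x₂ e := by
      rw [Finset.mul_sum, Finset.mul_sum, ← Finset.sum_add_distrib]
      exact Finset.sum_congr rfl fun e _ => (congrFun hxw e).symm
    rw [ge_iff_le, h3]
    have t1 := mul_le_mul_of_nonneg_left hle1 hl₁
    have t2 := mul_le_mul_of_nonneg_left hle2 hl₂
    linarith
  · intro hX
    set S : Set (E → ℝ) := {x | ∃ I J : Finset E, M₁.Indep ↑I ∧ M₂.Indep ↑J ∧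
      x = fun e => l₁ * (if e ∈ I then (1 : ℝ) else 0)
        + l₂ * (if e ∈ J then (1 : ℝ) else 0)} with hSdef
    have hSfin : S.Finite := by
      apply Set.Finite.subset (Set.finite_range (fun p : Finset E × Finset E =>
        fun e => l₁ * (if e ∈ p.1 then (1 : ℝ) else 0)
          + l₂ * (if e ∈ p.2 then (1 : ℝ) else 0)))
      rintro x ⟨I, J, -, -, rfl⟩
      exact ⟨(I, J), rfl⟩
    have hwS : w ∈ convexHull ℝ S := by
      by_contra hnot
      obtain ⟨f, u, hfu, huw⟩ := geometric_hahn_banach_closed_point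
        (convex_convexHull ℝ S) (hSfin.isClosed_convexHull ℝ) hnot
      set c : E → ℝ := fun e => f (fun j => if e = j then (1 : ℝ) else 0) with hcdef
      have hf : ∀ y : E → ℝ, f y = ∑ e, y e * c e := by
        intro y
        conv_lhs => rw [pi_eq_sum_univ y]
        rw [map_sum]
        exact Finset.sum_congr rfl fun e _ => by rw [map_smul]; simp [hcdef]
      obtain ⟨B₁, B₂, hB₁P, hB₂P, hB₁i, hB₂i, hKey⟩ :=
        key_greedy' M₁ M₂ h₁ h₂ w l₁ l₂ hl₁ hl₂ (fun X => hX X)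
          (Finset.univ.filter (fun e => 0 < c e)) c
          (fun e he => (Finset.mem_filter.mp he).2)
      have h1 : f w ≤ ∑ e ∈ Finset.univ.filter (fun e => 0 < c e), c e * w e := by
        rw [hf w]
        have hsplit := Finset.sum_filter_add_sum_filter_not Finset.univ
          (fun e => 0 < c e) (fun e => w e * c e)
        have hneg : ∑ e ∈ Finset.univ.filter (fun e => ¬ 0 < c e), w e * c e ≤ 0 := by
          apply Finset.sum_nonpos
          intro e he
          have hce : c e ≤ 0 := not_lt.mp (Finset.mem_filter.mp he).2
          exact mul_nonpos_iff.mpr (Or.inl ⟨hw e, hce⟩)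
        have hcomm : ∑ e ∈ Finset.univ.filter (fun e => 0 < c e), w e * c e
            = ∑ e ∈ Finset.univ.filter (fun e => 0 < c e), c e * w e :=
          Finset.sum_congr rfl fun e _ => mul_comm _ _
        linarith [hsplit, hneg, hcomm]
      have h2 : (fun e => l₁ * (if e ∈ B₁ then (1 : ℝ) else 0)
          + l₂ * (if e ∈ B₂ then (1 : ℝ) else 0)) ∈ S := ⟨B₁, B₂, hB₁i, hB₂i, rfl⟩
      have h3 := hfu _ (subset_convexHull ℝ S h2)
      have h4 : f (fun e => l₁ * (if e ∈ B₁ then (1 : ℝ) else 0)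
          + l₂ * (if e ∈ B₂ then (1 : ℝ) else 0))
          = l₁ * ∑ e ∈ B₁, c e + l₂ * ∑ e ∈ B₂, c e := by
        rw [hf]
        simp only [add_mul, Finset.sum_add_distrib, mul_assoc, ite_mul, one_mul, zero_mul,
          ← Finset.mul_sum, Finset.sum_ite_mem, Finset.univ_inter]
      rw [h4] at h3
      linarith
    rw [_root_.convexHull_eq] at hwS
    obtain ⟨ι, t, μ, z, hμ0, hμ1, hzS, hcm⟩ := hwS
    choose! I J hI hJ hz using hzS
    refine ⟨t.centerMass μ (fun i e => if e ∈ I i then (1 : ℝ) else 0), ?_,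
      t.centerMass μ (fun i e => if e ∈ J i then (1 : ℝ) else 0), ?_, ?_⟩
    · exact Finset.centerMass_mem_convexHull t hμ0 (by rw [hμ1]; norm_num)
        (fun i hi => ⟨I i, hI i hi, rfl⟩)
    · exact Finset.centerMass_mem_convexHull t hμ0 (by rw [hμ1]; norm_num)
        (fun i hi => ⟨J i, hJ i hi, rfl⟩)
    · funext e
      rw [← hcm]
      rw [Finset.centerMass_eq_of_sum_1 _ _ hμ1, Finset.centerMass_eq_of_sum_1 _ _ hμ1,
        Finset.centerMass_eq_of_sum_1 _ _ hμ1]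
      simp only [Finset.sum_apply, Pi.smul_apply, smul_eq_mul]
      rw [Finset.mul_sum, Finset.mul_sum, ← Finset.sum_add_distrib]
      refine Finset.sum_congr rfl fun i hi => ?_
      rw [hz i hi]
      dsimp only
      ring
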